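/- Let α > 0 and n ≥ 1 an integer. Let X, θ, Q be random variables on a probability space (Ω, ℙ) such that: X has distribution δ_1^{△_α n}; θ has the Pareto distribution π_{2α}; θ is independent of the pair (X, Q); Q takes values in {0,1}; and ℙ({Q = 1} ∩ {X ∈ B}) = ∫_B x^{−α} (δ_1^{△_α n})(dx) for every Borel set B ⊆ [1,∞). Then the random variable X · θ^Q has distribution δ_1^{△_α (n+1)}. -/

import Mathlib

open MeasureTheory Set

/-- The Pareto probability measure `π_{2α}` on `ℝ`, with density
`2α x^(-(2α+1)) 1_{(1,∞)}(x)` with respect to Lebesgue measure. -/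
noncomputable def pareto (α : ℝ) : Measure ℝ :=
  volume.withDensity
    (fun x => ENNReal.ofReal (if 1 < x then 2 * α * x ^ (-(2 * α) - 1) else 0))

/-- The Kendall probability kernel `ρ_{a,b} = (1 - (a/b)^α) δ_b + (a/b)^α T_b π_{2α}`
for `0 ≤ a ≤ b` (with `ρ_{0,0} = δ_0`). -/
noncomputable def kendallKernelLe (α a b : ℝ) : Measure ℝ :=
  if b = 0 then Measure.dirac 0
  else ENNReal.ofReal (1 - (a / b) ^ α) • Measure.dirac b
      + ENNReal.ofReal ((a / b) ^ α) • Measure.map (fun x => b * x) (pareto α)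

/-- The Kendall kernel `ρ_{x,y}`, extended symmetrically. -/
noncomputable def kendallKernel (α x y : ℝ) : Measure ℝ :=
  kendallKernelLe α (min x y) (max x y)

/-- The Kendall convolution `λ △_α ν`, defined by
`(λ △_α ν)(A) = ∫∫ ρ_{x,y}(A) λ(dx) ν(dy)`. -/
noncomputable def kendallConv (α : ℝ) (lam ν : Measure ℝ) : Measure ℝ :=
  lam.bind (fun x => ν.bind (fun y => kendallKernel α x y))

/-- The `n`-fold Kendall convolution power `ν^{△_α n}`, with `ν^{△_α 0} = δ_0`. -/
noncomputable def kendallPow (α : ℝ) (ν : Measure ℝ) : ℕ → Measure ℝ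
  | 0 => Measure.dirac 0
  | n + 1 => kendallConv α (kendallPow α ν n) ν

/-- The Kendall–Williamson transform `Φ_ν(t) = ∫ (1 - (t s)^α)_+ ν(ds)`. -/
noncomputable def williamson (α : ℝ) (ν : Measure ℝ) (t : ℝ) : ℝ :=
  ∫ s, max (1 - (t * s) ^ α) 0 ∂ν

open scoped ENNReal

lemma pareto_eq_paretoMeasure (α : ℝ) :
    pareto α = ProbabilityTheory.paretoMeasure 1 (2 * α) := by
  unfold pareto ProbabilityTheory.paretoMeasure
  apply withDensity_congr_ae
  have h : ∀ᵐ x : ℝ, x ≠ 1 := by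
    rw [ae_iff]
    simpa using measure_singleton (1 : ℝ)
  filter_upwards [h] with x hx
  rw [ProbabilityTheory.paretoPDF_eq]
  congr 1
  rcases lt_trichotomy x 1 with h' | h' | h'
  · rw [if_neg (by linarith), if_neg (by linarith)]
  · exact absurd h' hx
  · rw [if_pos h', if_pos h'.le, Real.one_rpow, mul_one]
    ring_nf

instance pareto_sfinite (α : ℝ) : SFinite (pareto α) := by
  unfold pareto; infer_instance

lemma pareto_prob {α : ℝ} (hα : 0 < α) : IsProbabilityMeasure (pareto α) := by
  rw [pareto_eq_paretoMeasure]
  exact ProbabilityTheory.isProbabilityMeasure_paretoMeasure one_pos (by linarith)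

lemma pareto_Iic (α : ℝ) : pareto α (Iic 1) = 0 := by
  rw [pareto, withDensity_apply _ measurableSet_Iic]
  rw [setLIntegral_congr_fun measurableSet_Iic
    (fun x (hx : x ≤ 1) => by
      rw [if_neg (not_lt.mpr hx), ENNReal.ofReal_zero])]
  simp

lemma measurable_pareto_mul (α : ℝ) {s : Set ℝ} (hs : MeasurableSet s) :
    Measurable fun b : ℝ => pareto α ((fun t => b * t) ⁻¹' s) := by
  have h : ∀ b : ℝ, pareto α ((fun t => b * t) ⁻¹' s)
      = ∫⁻ t, s.indicator (fun _ => (1 : ℝ≥0∞)) (b * t) ∂(pareto α) := by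
    intro b
    rw [← lintegral_indicator_one (hs.preimage (measurable_const_mul b))]
    apply lintegral_congr
    intro t
    by_cases h : b * t ∈ s <;> simp [Set.indicator, Set.mem_preimage, h]
  simp_rw [h]
  apply Measurable.lintegral_prod_right'
    (f := fun p : ℝ × ℝ => s.indicator (fun _ => (1 : ℝ≥0∞)) (p.1 * p.2))
  exact (measurable_const.indicator hs).comp (measurable_fst.mul measurable_snd)

lemma kendallKernelLe_apply (α a b : ℝ) {s : Set ℝ} (hs : MeasurableSet s) :
    kendallKernelLe α a b s =
      if b = 0 then Measure.dirac 0 s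
      else ENNReal.ofReal (1 - (a / b) ^ α) * s.indicator 1 b
        + ENNReal.ofReal ((a / b) ^ α) * pareto α ((fun t => b * t) ⁻¹' s) := by
  rw [kendallKernelLe]
  split_ifs with h
  · rfl
  · rw [Measure.add_apply, Measure.smul_apply, Measure.smul_apply, smul_eq_mul, smul_eq_mul,
      Measure.map_apply (measurable_const_mul b) hs, Measure.dirac_apply]

lemma measurable_kendallKernel (α : ℝ) :
    Measurable fun p : ℝ × ℝ => kendallKernel α p.1 p.2 := by
  apply Measure.measurable_of_measurable_coe
  intro s hs
  have key : Measurable fun p : ℝ × ℝ => kendallKernelLe α p.1 p.2 s := by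
    simp_rw [fun p : ℝ × ℝ => kendallKernelLe_apply α p.1 p.2 hs]
    apply Measurable.ite (measurable_snd (measurableSet_singleton (0 : ℝ)))
      measurable_const
    apply Measurable.add
    · apply Measurable.mul
      · exact ENNReal.measurable_ofReal.comp
          ((measurable_const.sub ((measurable_fst.div measurable_snd).pow_const α)))
      · exact (measurable_one.indicator hs).comp measurable_snd
    · apply Measurable.mul
      · exact ENNReal.measurable_ofReal.comp
          ((measurable_fst.div measurable_snd).pow_const α)
      · exact (measurable_pareto_mul α hs).comp measurable_snd
  have : (fun p : ℝ × ℝ => kendallKernel α p.1 p.2 s)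
      = (fun p : ℝ × ℝ => kendallKernelLe α p.1 p.2 s)
        ∘ (fun p : ℝ × ℝ => (min p.1 p.2, max p.1 p.2)) := rfl
  rw [this]
  exact key.comp ((measurable_fst.min measurable_snd).prodMk
    (measurable_fst.max measurable_snd))

lemma measurable_kendallKernel_one (α : ℝ) :
    Measurable fun x : ℝ => kendallKernel α x 1 :=
  (measurable_kendallKernel α).comp (measurable_id.prodMk measurable_const)

lemma kendallConv_dirac_one (α : ℝ) (μ : Measure ℝ) :
    kendallConv α μ (Measure.dirac 1) = μ.bind (fun x => kendallKernel α x 1) := by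
  unfold kendallConv
  congr 1
  funext x
  exact Measure.dirac_bind
    ((measurable_kendallKernel α).comp (measurable_prodMk_left)) 1

lemma kendallKernel_one_eq {α x : ℝ} (hx : 1 ≤ x) :
    kendallKernel α x 1
      = ENNReal.ofReal (1 - x ^ (-α)) • Measure.dirac x
        + ENNReal.ofReal (x ^ (-α)) • (pareto α).map (fun t => x * t) := by
  have hx0 : (0 : ℝ) < x := lt_of_lt_of_le one_pos hx
  have hdiv : (1 / x) ^ α = x ^ (-α) := by
    rw [one_div, Real.rpow_neg hx0.le, ← Real.inv_rpow hx0.le]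
  rw [kendallKernel, min_eq_right hx, max_eq_left hx, kendallKernelLe,
    if_neg (ne_of_gt hx0), hdiv]

lemma ofReal_rpow_neg_le_one {α x : ℝ} (hα : 0 < α) (hx : 1 ≤ x) :
    ENNReal.ofReal (1 - x ^ (-α)) + ENNReal.ofReal (x ^ (-α)) = 1 := by
  have h1 : 0 ≤ x ^ (-α) := Real.rpow_nonneg (by linarith) _
  have h2 : x ^ (-α) ≤ 1 :=
    Real.rpow_le_one_of_one_le_of_nonpos hx (by linarith)
  rw [← ENNReal.ofReal_add (by linarith) h1]
  norm_num

lemma kendallKernel_one_univ {α x : ℝ} (hα : 0 < α) (hx : 1 ≤ x) :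
    kendallKernel α x 1 univ = 1 := by
  have : IsProbabilityMeasure (pareto α) := pareto_prob hα
  rw [kendallKernel_one_eq hx, Measure.add_apply, Measure.smul_apply, Measure.smul_apply,
    smul_eq_mul, smul_eq_mul, Measure.map_apply (measurable_const_mul x) MeasurableSet.univ]
  simp only [Set.preimage_univ, measure_univ, mul_one]
  exact ofReal_rpow_neg_le_one hα hx

lemma kendallKernel_one_Iio {α x : ℝ} (hx : 1 ≤ x) :
    kendallKernel α x 1 (Iio 1) = 0 := by
  rw [kendallKernel_one_eq hx, Measure.add_apply, Measure.smul_apply, Measure.smul_apply,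
    smul_eq_mul, smul_eq_mul, Measure.map_apply (measurable_const_mul x) measurableSet_Iio,
    Measure.dirac_apply]
  have h1 : Set.indicator (Iio 1) (1 : ℝ → ℝ≥0∞) x = 0 := by
    rw [Set.indicator_of_notMem (by simpa using hx)]
  have h2 : pareto α ((fun t => x * t) ⁻¹' Iio 1) = 0 := by
    apply measure_mono_null _ (pareto_Iic α)
    intro t ht
    simp only [Set.mem_preimage, Set.mem_Iio] at ht
    by_contra h
    simp only [Set.mem_Iic, not_le] at h
    nlinarith
  rw [h1, h2, mul_zero, mul_zero, add_zero]

lemma kendallKernel_zero_one (α : ℝ) (hα : 0 < α) :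
    kendallKernel α 0 1 = Measure.dirac 1 := by
  rw [kendallKernel, min_eq_left zero_le_one, max_eq_right zero_le_one, kendallKernelLe,
    if_neg one_ne_zero]
  have : ((0 : ℝ) / 1) ^ α = 0 := by
    rw [zero_div, Real.zero_rpow (ne_of_gt hα)]
  rw [this]
  simp

lemma kendallPow_facts {α : ℝ} (hα : 0 < α) :
    ∀ n : ℕ, 1 ≤ n →
      kendallPow α (Measure.dirac 1) n univ = 1
        ∧ kendallPow α (Measure.dirac 1) n (Iio 1) = 0 := by
  intro n hn
  induction n with
  | zero => omega
  | succ m ih =>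
    have hstep : kendallPow α (Measure.dirac 1) (m + 1)
        = (kendallPow α (Measure.dirac 1) m).bind (fun x => kendallKernel α x 1) := by
      rw [show kendallPow α (Measure.dirac 1) (m + 1)
          = kendallConv α (kendallPow α (Measure.dirac 1) m) (Measure.dirac 1) from rfl,
        kendallConv_dirac_one]
    rcases Nat.eq_zero_or_pos m with hm | hm
    · subst hm
      have : kendallPow α (Measure.dirac 1) 1 = Measure.dirac 1 := by
        rw [hstep, show kendallPow α (Measure.dirac 1) 0 = Measure.dirac 0 from rfl,
          Measure.dirac_bind (measurable_kendallKernel_one α), kendallKernel_zero_one α hα]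
      rw [this]
      constructor
      · simp
      · rw [Measure.dirac_apply]
        simp
    · obtain ⟨hu, hi⟩ := ih hm
      set μ := kendallPow α (Measure.dirac 1) m with hμ
      have hae : ∀ᵐ x ∂μ, 1 ≤ x := by
        rw [ae_iff]
        have : {x : ℝ | ¬ 1 ≤ x} = Iio 1 := by ext x; simp
        rw [this]; exact hi
      rw [hstep]
      constructor
      · rw [Measure.bind_apply MeasurableSet.univ (measurable_kendallKernel_one α).aemeasurable]
        have : ∫⁻ x, kendallKernel α x 1 univ ∂μ = ∫⁻ _, 1 ∂μ := by
          apply lintegral_congr_ae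
          filter_upwards [hae] with x hx
          exact kendallKernel_one_univ hα hx
        rw [this, lintegral_one, hu]
      · rw [Measure.bind_apply measurableSet_Iio (measurable_kendallKernel_one α).aemeasurable]
        have : ∫⁻ x, kendallKernel α x 1 (Iio 1) ∂μ = ∫⁻ _, 0 ∂μ := by
          apply lintegral_congr_ae
          filter_upwards [hae] with x hx
          exact kendallKernel_one_Iio hx
        rw [this, lintegral_zero]

lemma pareto_mul_apply (α : ℝ) {s : Set ℝ} (hs : MeasurableSet s) (b : ℝ) :
    pareto α ((fun t => b * t) ⁻¹' s)
      = ∫⁻ t, s.indicator (fun _ => (1 : ℝ≥0∞)) (b * t) ∂(pareto α) := by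
  rw [← lintegral_indicator_one (hs.preimage (measurable_const_mul b))]
  apply lintegral_congr
  intro t
  by_cases h : b * t ∈ s <;> simp [Set.indicator, Set.mem_preimage, h]

/-- One-step representation of the Kendall random walk with unit step `δ_1`: if `X` has
distribution `δ_1^{△_α n}`, `θ` has the Pareto distribution `π_{2α}` and is independent of
`(X, Q)`, `Q` takes values in `{0,1}`, and `ℙ({Q = 1} ∩ {X ∈ B}) = ∫_B x^(-α) dδ_1^{△_α n}`
for every Borel `B ⊆ [1,∞)`, then `X · θ^Q` has distribution `δ_1^{△_α (n+1)}`. -/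
theorem kendall_walk_step_dirac
    {Ω : Type*} [MeasurableSpace Ω] (ℙ : Measure Ω) [IsProbabilityMeasure ℙ]
    (α : ℝ) (hα : 0 < α) (n : ℕ) (hn : 1 ≤ n)
    (X θ Q : Ω → ℝ) (hX : Measurable X) (hθ : Measurable θ) (hQ : Measurable Q)
    (hXlaw : Measure.map X ℙ = kendallPow α (Measure.dirac 1) n)
    (hθlaw : Measure.map θ ℙ = pareto α)
    (hindep : ProbabilityTheory.IndepFun θ (fun ω => (X ω, Q ω)) ℙ)
    (hQ01 : ∀ ω, Q ω = 0 ∨ Q ω = 1)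
    (hQ1 : ∀ B : Set ℝ, MeasurableSet B → B ⊆ Set.Ici 1 →
      ℙ ({ω | Q ω = 1} ∩ X ⁻¹' B)
        = ∫⁻ x in B, ENNReal.ofReal (x ^ (-α)) ∂(kendallPow α (Measure.dirac 1) n)) :
    Measure.map (fun ω => X ω * θ ω ^ Q ω) ℙ = kendallPow α (Measure.dirac 1) (n + 1) := by
  set μ := kendallPow α (Measure.dirac 1) n with hμdef
  obtain ⟨hu, hi⟩ := kendallPow_facts hα n hn
  have instμ : IsProbabilityMeasure μ := ⟨hu⟩
  have instπ : IsProbabilityMeasure (pareto α) := pareto_prob hα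
  have hμae : ∀ᵐ x ∂μ, 1 ≤ x := by
    rw [ae_iff]
    have h : {x : ℝ | ¬ 1 ≤ x} = Iio 1 := by ext x; simp
    rw [h]; exact hi
  have hXIio : ℙ (X ⁻¹' Iio 1) = 0 := by
    rw [← Measure.map_apply hX measurableSet_Iio, hXlaw]; exact hi
  have hres : ∀ (s' : Set ℝ) (E : Set Ω),
      ℙ (X ⁻¹' s' ∩ E) = ℙ (X ⁻¹' (s' ∩ Ici 1) ∩ E) := by
    intro s' E
    apply le_antisymm
    · calc ℙ (X ⁻¹' s' ∩ E)
          ≤ ℙ ((X ⁻¹' (s' ∩ Ici 1) ∩ E) ∪ X ⁻¹' (Iio 1)) := by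
            apply measure_mono
            rintro ω ⟨hs', hE⟩
            by_cases h1 : 1 ≤ X ω
            · exact Or.inl ⟨⟨hs', h1⟩, hE⟩
            · exact Or.inr (by simpa using h1)
      _ ≤ ℙ (X ⁻¹' (s' ∩ Ici 1) ∩ E) + ℙ (X ⁻¹' (Iio 1)) := measure_union_le _ _
      _ = ℙ (X ⁻¹' (s' ∩ Ici 1) ∩ E) := by rw [hXIio, add_zero]
    · exact measure_mono (inter_subset_inter_left _ (preimage_mono inter_subset_left))
  have hE1 : MeasurableSet {ω | Q ω = 1} := hQ (measurableSet_singleton 1)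
  have hZ : Measurable fun ω => X ω * θ ω ^ Q ω := hX.mul (hθ.pow hQ)
  ext s hs
  -- the two pieces
  set P1 := ∫⁻ x in s ∩ Ici 1, ENNReal.ofReal (1 - x ^ (-α)) ∂μ with hP1def
  set P2 := ∫⁻ x, ENNReal.ofReal (x ^ (-α)) * pareto α ((fun t => x * t) ⁻¹' s) ∂μ
    with hP2def
  have hB : MeasurableSet (s ∩ Ici 1) := hs.inter measurableSet_Ici
  -- RHS computation
  have hRHS : kendallPow α (Measure.dirac 1) (n + 1) s = P1 + P2 := by
    have hstep : kendallPow α (Measure.dirac 1) (n + 1)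
        = μ.bind (fun x => kendallKernel α x 1) := by
      rw [show kendallPow α (Measure.dirac 1) (n + 1)
          = kendallConv α μ (Measure.dirac 1) from rfl, kendallConv_dirac_one]
    rw [hstep, Measure.bind_apply hs (measurable_kendallKernel_one α).aemeasurable]
    have hcong : ∫⁻ x, kendallKernel α x 1 s ∂μ
        = ∫⁻ x, (s.indicator (fun y => ENNReal.ofReal (1 - y ^ (-α))) x
            + ENNReal.ofReal (x ^ (-α)) * pareto α ((fun t => x * t) ⁻¹' s)) ∂μ := by
      apply lintegral_congr_ae
      filter_upwards [hμae] with x hx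
      rw [kendallKernel_one_eq hx, Measure.add_apply, Measure.smul_apply,
        Measure.smul_apply, smul_eq_mul, smul_eq_mul,
        Measure.map_apply (measurable_const_mul x) hs, Measure.dirac_apply]
      congr 1
      by_cases h : x ∈ s <;> simp [Set.indicator, h]
    rw [hcong, lintegral_add_left]
    · congr 1
      rw [lintegral_indicator hs]
      apply setLIntegral_congr
      apply MeasureTheory.ae_eq_set.2
      constructor
      · apply measure_mono_null _ hi
        rintro x ⟨hxs, hxn⟩
        have hlt : ¬ (1 ≤ x) := fun h => hxn ⟨hxs, h⟩
        exact not_le.mp hlt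
      · apply measure_mono_null _ (measure_empty (μ := μ))
        intro x hx
        exact absurd hx.1.1 hx.2
    · exact (ENNReal.measurable_ofReal.comp
        (measurable_const.sub (measurable_id.pow_const (-α)))).indicator hs
  -- LHS
  rw [Measure.map_apply hZ hs]
  have hA1 : (fun ω => X ω * θ ω ^ Q ω) ⁻¹' s ∩ {ω | Q ω = 1}
      = (fun ω => X ω * θ ω) ⁻¹' s ∩ {ω | Q ω = 1} := by
    ext ω
    simp only [Set.mem_inter_iff, Set.mem_preimage, Set.mem_setOf_eq]
    constructor
    · rintro ⟨h, hq⟩; refine ⟨?_, hq⟩; rw [hq, Real.rpow_one] at h; exact h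
    · rintro ⟨h, hq⟩; refine ⟨?_, hq⟩; rw [hq, Real.rpow_one]; exact h
  have hA0 : (fun ω => X ω * θ ω ^ Q ω) ⁻¹' s \ {ω | Q ω = 1}
      = X ⁻¹' s \ {ω | Q ω = 1} := by
    ext ω
    simp only [Set.mem_diff, Set.mem_preimage, Set.mem_setOf_eq]
    constructor
    · rintro ⟨h, hq⟩
      have hq0 : Q ω = 0 := (hQ01 ω).resolve_right hq
      rw [hq0, Real.rpow_zero, mul_one] at h
      exact ⟨h, hq⟩
    · rintro ⟨h, hq⟩
      have hq0 : Q ω = 0 := (hQ01 ω).resolve_right hq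
      refine ⟨?_, hq⟩
      rw [hq0, Real.rpow_zero, mul_one]
      exact h
  have hsplit : ℙ ((fun ω => X ω * θ ω ^ Q ω) ⁻¹' s)
      = ℙ ((fun ω => X ω * θ ω) ⁻¹' s ∩ {ω | Q ω = 1})
        + ℙ (X ⁻¹' s \ {ω | Q ω = 1}) := by
    rw [← hA1, ← hA0, measure_inter_add_diff _ hE1]
  -- Piece 1
  set I := ∫⁻ x in s ∩ Ici 1, ENNReal.ofReal (x ^ (-α)) ∂μ with hIdef
  have hQ1B : ℙ ({ω | Q ω = 1} ∩ X ⁻¹' (s ∩ Ici 1)) = I := hQ1 _ hB inter_subset_right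
  have hIfin : I ≠ ⊤ := by
    rw [← hQ1B]
    exact (measure_lt_top ℙ _).ne
  have hmuB : μ (s ∩ Ici 1) = I + P1 := by
    rw [← setLIntegral_one (s ∩ Ici 1),
      setLIntegral_congr_fun hB (fun x hx =>
        ((ofReal_rpow_neg_le_one hα hx.2).symm.trans (add_comm _ _))),
      lintegral_add_left (f := fun x : ℝ => ENNReal.ofReal (x ^ (-α)))
        ((measurable_id.pow_const (-α)).ennreal_ofReal)]
  have hpiece1 : ℙ (X ⁻¹' s \ {ω | Q ω = 1}) = P1 := by
    rw [Set.diff_eq, hres s {ω | Q ω = 1}ᶜ, ← Set.diff_eq]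
    have hXB : ℙ (X ⁻¹' (s ∩ Ici 1)) = μ (s ∩ Ici 1) := by
      rw [← Measure.map_apply hX hB, hXlaw]
    have hsum := measure_inter_add_diff (μ := ℙ) (X ⁻¹' (s ∩ Ici 1)) hE1
    rw [Set.inter_comm] at hQ1B
    rw [hQ1B, hXB, hmuB] at hsum
    exact (ENNReal.add_right_inj hIfin).mp hsum
  -- Piece 2
  set ν := Measure.map (fun ω => (X ω, Q ω)) ℙ with hνdef
  have hXQ : Measurable fun ω => (X ω, Q ω) := hX.prodMk hQ
  have hjoint : Measure.map (fun ω => (θ ω, (X ω, Q ω))) ℙ = (pareto α).prod ν := by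
    have h := (ProbabilityTheory.indepFun_iff_map_prod_eq_prod_map_map
      hθ.aemeasurable hXQ.aemeasurable).mp hindep
    rw [h, hθlaw]
  have hG : MeasurableSet {p : ℝ × ℝ × ℝ | p.2.1 * p.1 ∈ s ∧ p.2.2 = 1} :=
    ((measurable_snd.fst.mul measurable_fst) hs).inter
      (measurable_snd.snd (measurableSet_singleton 1))
  have hZ1 : Measurable fun ω => (θ ω, (X ω, Q ω)) := hθ.prodMk hXQ
  have hpre : (fun ω => X ω * θ ω) ⁻¹' s ∩ {ω | Q ω = 1}
      = (fun ω => (θ ω, (X ω, Q ω)))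
          ⁻¹' {p : ℝ × ℝ × ℝ | p.2.1 * p.1 ∈ s ∧ p.2.2 = 1} := rfl
  have hpiece2 : ℙ ((fun ω => X ω * θ ω) ⁻¹' s ∩ {ω | Q ω = 1}) = P2 := by
    rw [hpre, ← Measure.map_apply hZ1 hG, hjoint, Measure.prod_apply hG]
    have hmk : ∀ t : ℝ, ν (Prod.mk t ⁻¹' {p : ℝ × ℝ × ℝ | p.2.1 * p.1 ∈ s ∧ p.2.2 = 1})
        = ∫⁻ x in ((fun x => x * t) ⁻¹' s) ∩ Ici 1, ENNReal.ofReal (x ^ (-α)) ∂μ := by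
      intro t
      have hset : MeasurableSet {q : ℝ × ℝ | q.1 * t ∈ s ∧ q.2 = 1} :=
        ((measurable_fst.mul_const t) hs).inter
          (measurable_snd (measurableSet_singleton 1))
      have hpre2 : Prod.mk t ⁻¹' {p : ℝ × ℝ × ℝ | p.2.1 * p.1 ∈ s ∧ p.2.2 = 1}
          = {q : ℝ × ℝ | q.1 * t ∈ s ∧ q.2 = 1} := rfl
      have hpre3 : (fun ω => (X ω, Q ω)) ⁻¹' {q : ℝ × ℝ | q.1 * t ∈ s ∧ q.2 = 1}
          = X ⁻¹' ((fun x => x * t) ⁻¹' s) ∩ {ω | Q ω = 1} := rfl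
      rw [hpre2, hνdef, Measure.map_apply hXQ hset, hpre3,
        hres ((fun x => x * t) ⁻¹' s) {ω | Q ω = 1}, Set.inter_comm]
      exact hQ1 _ ((hs.preimage (measurable_mul_const t)).inter measurableSet_Ici)
        inter_subset_right
    rw [lintegral_congr hmk]
    have hFind : ∀ t x : ℝ,
        (((fun x => x * t) ⁻¹' s) ∩ Ici 1).indicator
            (fun x => ENNReal.ofReal (x ^ (-α))) x
          = ENNReal.ofReal (x ^ (-α)) * s.indicator (fun _ => (1 : ℝ≥0∞)) (x * t)
              * (Ici 1).indicator (fun _ => (1 : ℝ≥0∞)) x := by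
      intro t x
      by_cases h1 : x * t ∈ s <;> by_cases h2 : (1 : ℝ) ≤ x <;>
        simp [Set.indicator, h1, h2]
    have hinner : ∀ t : ℝ,
        ∫⁻ x in ((fun x => x * t) ⁻¹' s) ∩ Ici 1, ENNReal.ofReal (x ^ (-α)) ∂μ
          = ∫⁻ x, ENNReal.ofReal (x ^ (-α)) * s.indicator (fun _ => (1 : ℝ≥0∞)) (x * t)
              * (Ici 1).indicator (fun _ => (1 : ℝ≥0∞)) x ∂μ := by
      intro t
      rw [← lintegral_indicator ((hs.preimage (measurable_mul_const t)).inter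
        measurableSet_Ici)]
      exact lintegral_congr fun x => hFind t x
    rw [lintegral_congr hinner]
    have hswap : ∫⁻ t, ∫⁻ x, ENNReal.ofReal (x ^ (-α))
            * s.indicator (fun _ => (1 : ℝ≥0∞)) (x * t)
            * (Ici 1).indicator (fun _ => (1 : ℝ≥0∞)) x ∂μ ∂(pareto α)
        = ∫⁻ x, ∫⁻ t, ENNReal.ofReal (x ^ (-α))
            * s.indicator (fun _ => (1 : ℝ≥0∞)) (x * t)
            * (Ici 1).indicator (fun _ => (1 : ℝ≥0∞)) x ∂(pareto α) ∂μ := by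
      apply lintegral_lintegral_swap
      apply Measurable.aemeasurable
      apply Measurable.mul
      apply Measurable.mul
      · exact ENNReal.measurable_ofReal.comp (measurable_snd.pow_const (-α))
      · exact (measurable_const.indicator hs).comp (measurable_snd.mul measurable_fst)
      · exact (measurable_const.indicator measurableSet_Ici).comp measurable_snd
    rw [hswap]
    have hinner2 : ∀ x : ℝ,
        ∫⁻ t, ENNReal.ofReal (x ^ (-α)) * s.indicator (fun _ => (1 : ℝ≥0∞)) (x * t)
            * (Ici 1).indicator (fun _ => (1 : ℝ≥0∞)) x ∂(pareto α)
          = ENNReal.ofReal (x ^ (-α)) * (Ici 1).indicator (fun _ => (1 : ℝ≥0∞)) x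
              * pareto α ((fun t => x * t) ⁻¹' s) := by
      intro x
      have hrw : ∀ t : ℝ, ENNReal.ofReal (x ^ (-α)) * s.indicator (fun _ => (1 : ℝ≥0∞)) (x * t)
            * (Ici 1).indicator (fun _ => (1 : ℝ≥0∞)) x
          = (ENNReal.ofReal (x ^ (-α)) * (Ici 1).indicator (fun _ => (1 : ℝ≥0∞)) x)
              * s.indicator (fun _ => (1 : ℝ≥0∞)) (x * t) := fun t => by ring
      rw [lintegral_congr hrw, lintegral_const_mul' _ _ ?fin, pareto_mul_apply α hs x]
      case fin =>
        apply ENNReal.mul_ne_top ENNReal.ofReal_ne_top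
        by_cases h : (1 : ℝ) ≤ x <;> simp [Set.indicator, h]
    rw [lintegral_congr hinner2]
    apply lintegral_congr_ae
    filter_upwards [hμae] with x hx
    rw [Set.indicator_of_mem (show x ∈ Ici 1 from hx) (fun _ => (1 : ℝ≥0∞)), mul_one]
  rw [hsplit, hpiece1, hpiece2, hRHS]
  exact add_comm _ _
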